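/- (Negative semi-definiteness of the multiplier response matrix) Let D ⊆ ℝᴹ be open, let F : ℝⁿ → ℝ and c : ℝⁿ → ℝᴹ be twice continuously differentiable, let v* : D → ℝⁿ and Λ : D → ℝᴹ be continuously differentiable with c(v*(x)) = x and ∇F(v*(x)) = Σₘ Λₘ(x)·∇cᵐ(v*(x)) for all x ∈ D. Fix x ∈ D and suppose the n×n matrix Hess F(v*(x)) − Σₘ Λₘ(x)·Hess cᵐ(v*(x)) is negative semidefinite. Then the M×M matrix J with entries Jᵢⱼ = ∂Λᵢ/∂xʲ(x) is negative semidefinite: ρᵀJρ ≤ 0 for all ρ ∈ ℝᴹ. -/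

import Mathlib

lemma sum_single {k : ℕ} (w : Fin k → ℝ) :
    ∑ s, w s • (Pi.single s 1 : Fin k → ℝ) = w := by
  simp only [← Pi.single_smul, smul_eq_mul, mul_one]
  exact Finset.univ_sum_single w

lemma clm_expand {k : ℕ} {G : Type*} [NormedAddCommGroup G] [NormedSpace ℝ G]
    (T : (Fin k → ℝ) →L[ℝ] G) (w : Fin k → ℝ) :
    T w = ∑ s, w s • T (Pi.single s 1) := by
  conv_lhs => rw [← sum_single w]
  rw [map_sum]
  simp

lemma bilin_expand {k : ℕ} (B : (Fin k → ℝ) →L[ℝ] ((Fin k → ℝ) →L[ℝ] ℝ)) (w u : Fin k → ℝ) :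
    B w u = ∑ s, ∑ t, w s * B (Pi.single s 1) (Pi.single t 1) * u t := by
  rw [clm_expand B w, ContinuousLinearMap.sum_apply]
  refine Finset.sum_congr rfl fun s _ => ?_
  rw [ContinuousLinearMap.smul_apply, clm_expand (B _) u, smul_eq_mul, Finset.mul_sum]
  exact Finset.sum_congr rfl fun t _ => by rw [smul_eq_mul]; ring




/-- Negative semi-definiteness of the multiplier response matrix: in the setting
`max F(v)` s.t. `c(v) = x`, fix `x ∈ D` and suppose the Hessian of the Lagrangian
`Hess F(v*(x)) - ∑ m Λ_m(x) Hess cᵐ(v*(x))` is negative semidefinite.  Then the matrix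
`J i j = ∂Λᵢ/∂xʲ(x)` is negative semidefinite: `ρᵀ J ρ ≤ 0` for all `ρ`. -/
theorem stmt_8 (n M : ℕ) (D : Set (Fin M → ℝ)) (hD : IsOpen D)
    (F : (Fin n → ℝ) → ℝ) (hF : ContDiff ℝ 2 F)
    (c : (Fin n → ℝ) → (Fin M → ℝ)) (hc : ContDiff ℝ 2 c)
    (vstar : (Fin M → ℝ) → (Fin n → ℝ)) (hv : ContDiffOn ℝ 1 vstar D)
    (Λ : (Fin M → ℝ) → (Fin M → ℝ)) (hΛ : ContDiffOn ℝ 1 Λ D)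
    (hcon : ∀ x ∈ D, c (vstar x) = x)
    (hFOC : ∀ x ∈ D, fderiv ℝ F (vstar x)
        = ∑ m, Λ x m • fderiv ℝ (fun v => c v m) (vstar x))
    (x : Fin M → ℝ) (hx : x ∈ D)
    (hnsd : ∀ w : Fin n → ℝ,
      ∑ s, ∑ k, w s *
        ((fderiv ℝ (fun v => fderiv ℝ F v (Pi.single k 1)) (vstar x) (Pi.single s 1))
          - ∑ m, Λ x m *
              fderiv ℝ (fun v => fderiv ℝ (fun u => c u m) v (Pi.single k 1)) (vstar x)
                (Pi.single s 1)) * w k ≤ 0) :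
    ∀ ρ : Fin M → ℝ,
      ∑ i, ∑ j, ρ i * fderiv ℝ (fun y => Λ y i) x (Pi.single j 1) * ρ j ≤ 0 := by
  intro ρ
  have hxnhds : D ∈ nhds x := hD.mem_nhds hx
  have hvx : DifferentiableAt ℝ vstar x := (hv.contDiffAt hxnhds).differentiableAt one_ne_zero
  have hΛx : DifferentiableAt ℝ Λ x := (hΛ.contDiffAt hxnhds).differentiableAt one_ne_zero
  have hΛxm : ∀ m, DifferentiableAt ℝ (fun y => Λ y m) x := fun m =>
    differentiableAt_pi.mp hΛx m
  have hF' : ContDiff ℝ 1 (fderiv ℝ F) := hF.fderiv_right (by norm_num)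
  have hcm : ∀ m, ContDiff ℝ 2 (fun v => c v m) := fun m => (contDiff_pi.mp hc) m
  have hc' : ∀ m, ContDiff ℝ 1 (fderiv ℝ (fun v => c v m)) := fun m =>
    (hcm m).fderiv_right (by norm_num)
  set V := fderiv ℝ vstar x with hV
  -- Step A : constraint derivative
  have stepA : ∀ m, fderiv ℝ (fun v => c v m) (vstar x) (V ρ) = ρ m := by
    intro m
    have hev : (fun y => c (vstar y) m) =ᶠ[nhds x] (fun y => y m) :=
      Filter.eventuallyEq_of_mem hxnhds (fun y hy => congrFun (hcon y hy) m)
    have h1 : fderiv ℝ (fun y => c (vstar y) m) x = fderiv ℝ (fun y : Fin M → ℝ => y m) x :=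
      hev.fderiv_eq
    have h2 : fderiv ℝ (fun y => c (vstar y) m) x
        = (fderiv ℝ (fun v => c v m) (vstar x)).comp V :=
      fderiv_comp x (((hcm m).differentiable (by norm_num)) (vstar x)) hvx
    have h3 : fderiv ℝ (fun y : Fin M → ℝ => y m) x
        = (ContinuousLinearMap.proj m : (Fin M → ℝ) →L[ℝ] ℝ) :=
      (ContinuousLinearMap.proj m : (Fin M → ℝ) →L[ℝ] ℝ).fderiv
    have := congrFun (congrArg DFunLike.coe (h2.symm.trans (h1.trans h3))) ρ
    simpa using this
  -- Step B : differentiate the FOC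
  set Bf : (Fin n → ℝ) →L[ℝ] ((Fin n → ℝ) →L[ℝ] ℝ) := fderiv ℝ (fderiv ℝ F) (vstar x) with hBf
  set Bc : Fin M → ((Fin n → ℝ) →L[ℝ] ((Fin n → ℝ) →L[ℝ] ℝ)) :=
    fun m => fderiv ℝ (fderiv ℝ (fun v => c v m)) (vstar x) with hBc
  have hgm : ∀ m, DifferentiableAt ℝ (fun y => fderiv ℝ (fun v => c v m) (vstar y)) x :=
    fun m => (((hc' m).differentiable one_ne_zero) (vstar x)).comp x hvx
  have hevF : (fun y => fderiv ℝ F (vstar y)) =ᶠ[nhds x]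
      (fun y => ∑ m, Λ y m • fderiv ℝ (fun v => c v m) (vstar y)) :=
    Filter.eventuallyEq_of_mem hxnhds hFOC
  have hLHS : fderiv ℝ (fun y => fderiv ℝ F (vstar y)) x = Bf.comp V :=
    fderiv_comp x ((hF'.differentiable one_ne_zero) (vstar x)) hvx
  have hgm' : ∀ m, fderiv ℝ (fun y => fderiv ℝ (fun v => c v m) (vstar y)) x = (Bc m).comp V :=
    fun m => fderiv_comp x (((hc' m).differentiable one_ne_zero) (vstar x)) hvx
  have hRHS : fderiv ℝ (fun y => ∑ m, Λ y m • fderiv ℝ (fun v => c v m) (vstar y)) x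
      = ∑ m, (Λ x m • ((Bc m).comp V)
            + (fderiv ℝ (fun y => Λ y m) x).smulRight (fderiv ℝ (fun v => c v m) (vstar x))) := by
    rw [fderiv_fun_sum (A := fun m y => Λ y m • fderiv ℝ (fun v => c v m) (vstar y))
      (fun m _ => ((hΛxm m).smul (hgm m)))]
    refine Finset.sum_congr rfl fun m _ => ?_
    rw [fderiv_fun_smul (hΛxm m) (hgm m), hgm' m]
  -- key scalar identity
  have key : Bf (V ρ) (V ρ)
      = ∑ m, (Λ x m * (Bc m) (V ρ) (V ρ) + fderiv ℝ (fun y => Λ y m) x ρ * ρ m) := by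
    have h := hLHS.symm.trans ((hevF.fderiv_eq).trans hRHS)
    have h2 := congrFun (congrArg DFunLike.coe (congrFun (congrArg DFunLike.coe h) ρ)) (V ρ)
    simp only [ContinuousLinearMap.comp_apply, ContinuousLinearMap.sum_apply,
      ContinuousLinearMap.add_apply, ContinuousLinearMap.smul_apply,
      ContinuousLinearMap.smulRight_apply, smul_eq_mul] at h2
    rw [h2]
    exact Finset.sum_congr rfl fun m _ => by rw [stepA m]
  -- identify hnsd entries with second-derivative bilinear forms
  have hent : ∀ (G : (Fin n → ℝ) → ℝ), DifferentiableAt ℝ (fderiv ℝ G) (vstar x) →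
      ∀ u e : Fin n → ℝ, fderiv ℝ (fun v => fderiv ℝ G v u) (vstar x) e
        = fderiv ℝ (fderiv ℝ G) (vstar x) e u := by
    intro G hG u e
    rw [fderiv_clm_apply hG (differentiableAt_const u)]
    simp
  have hentF : ∀ u e : Fin n → ℝ, fderiv ℝ (fun v => fderiv ℝ F v u) (vstar x) e = Bf e u :=
    hent F ((hF'.differentiable one_ne_zero) (vstar x))
  have hentC : ∀ m, ∀ u e : Fin n → ℝ,
      fderiv ℝ (fun v => fderiv ℝ (fun v' => c v' m) v u) (vstar x) e = Bc m e u :=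
    fun m => hent (fun v => c v m) (((hc' m).differentiable one_ne_zero) (vstar x))
  -- the quadratic form identity
  have heq : (∑ s, ∑ k, (V ρ) s * ((Bf (Pi.single s 1)) (Pi.single k 1)
        - ∑ m, Λ x m * (Bc m (Pi.single s 1)) (Pi.single k 1)) * (V ρ) k)
      = Bf (V ρ) (V ρ) - ∑ m, Λ x m * (Bc m) (V ρ) (V ρ) := by
    have e1 : ∀ s k : Fin n, (V ρ) s * ((Bf (Pi.single s 1)) (Pi.single k 1)
          - ∑ m, Λ x m * (Bc m (Pi.single s 1)) (Pi.single k 1)) * (V ρ) k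
        = (V ρ) s * (Bf (Pi.single s 1)) (Pi.single k 1) * (V ρ) k
          - ∑ m, Λ x m * ((V ρ) s * (Bc m (Pi.single s 1)) (Pi.single k 1) * (V ρ) k) := by
      intro s k
      rw [mul_sub, sub_mul, Finset.mul_sum, Finset.sum_mul]
      congr 1
      exact Finset.sum_congr rfl fun m _ => by ring
    simp only [e1, Finset.sum_sub_distrib]
    congr 1
    · exact (bilin_expand Bf (V ρ) (V ρ)).symm
    · calc ∑ s, ∑ k, ∑ m, Λ x m * ((V ρ) s * (Bc m (Pi.single s 1)) (Pi.single k 1) * (V ρ) k)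
          = ∑ s, ∑ m, ∑ k, Λ x m * ((V ρ) s * (Bc m (Pi.single s 1)) (Pi.single k 1) * (V ρ) k) :=
            Finset.sum_congr rfl fun s _ => Finset.sum_comm
        _ = ∑ m, ∑ s, ∑ k, Λ x m * ((V ρ) s * (Bc m (Pi.single s 1)) (Pi.single k 1) * (V ρ) k) :=
            Finset.sum_comm
        _ = ∑ m, Λ x m * (Bc m) (V ρ) (V ρ) := by
            refine Finset.sum_congr rfl fun m _ => ?_
            rw [bilin_expand (Bc m) (V ρ) (V ρ)]
            simp [Finset.mul_sum]
  -- conclude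
  have hsum : ∑ m, fderiv ℝ (fun y => Λ y m) x ρ * ρ m
      = Bf (V ρ) (V ρ) - ∑ m, Λ x m * (Bc m) (V ρ) (V ρ) := by
    rw [key, Finset.sum_add_distrib]
    ring
  have targ : (∑ i, ∑ j, ρ i * fderiv ℝ (fun y => Λ y i) x (Pi.single j 1) * ρ j)
      = ∑ m, fderiv ℝ (fun y => Λ y m) x ρ * ρ m := by
    refine Finset.sum_congr rfl fun i _ => ?_
    rw [clm_expand (fderiv ℝ (fun y => Λ y i) x) ρ, Finset.sum_mul]
    exact Finset.sum_congr rfl fun j _ => by rw [smul_eq_mul]; ring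
  have h0 := hnsd (V ρ)
  simp only [hentF, hentC] at h0
  rw [targ, hsum, ← heq]
  exact h0
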